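/- arXiv:1903.01592 — 2 statements merged into one kernel-verified Lean document; each statement's English description precedes it below -/
import Mathlib

section
/- Let V be an n-dimensional Euclidean space, H a symmetric bilinear form on V, and v ∈ V a nonzero vector such that the restriction H|_{v^⊥} is nondegenerate. Then det(H) = det(H|_{v^⊥}) · ‖v‖⁻² · H(v, v^H), where v^H is the projection of v onto (v^⊥)^{⊥_H} (the H-orthogonal complement of v^⊥) parallel to v^⊥. -/
open Matrix in
lemma arrow_det {m : ℕ} (a : ℝ) (w lam : Fin m → ℝ) (hlam : ∀ i, lam i ≠ 0) :
    (Matrix.of (Fin.cons (Fin.cons a w)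
        (fun i => Fin.cons (w i) (fun j => if i = j then lam i else 0))
        : Fin (m+1) → Fin (m+1) → ℝ)).det
      = (a - ∑ i, w i ^ 2 / lam i) * ∏ i, lam i := by
  classical
  set S : ℝ := a - ∑ i, w i ^ 2 / lam i with hS
  set L : Matrix (Fin (m+1)) (Fin (m+1)) ℝ :=
    Matrix.of (fun i j => if j = 0 then (Fin.cons 1 (fun i' => w i' / lam i') : Fin (m+1) → ℝ) i
      else if i = j then 1 else 0) with hL
  set D : Matrix (Fin (m+1)) (Fin (m+1)) ℝ := Matrix.diagonal (Fin.cons S lam) with hD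
  have hLlow : L.BlockTriangular OrderDual.toDual := by
    intro i j hij
    have hij' : i < j := hij
    have hj0 : j ≠ 0 := Fin.pos_iff_ne_zero.mp (lt_of_le_of_lt (Fin.zero_le i) hij')
    simp [hL, hj0, Fin.ne_of_lt hij']
  have hdetL : L.det = 1 := by
    rw [Matrix.det_of_lowerTriangular L hLlow]
    apply Finset.prod_eq_one
    intro i _
    rcases Fin.eq_zero_or_eq_succ i with h | ⟨i', rfl⟩
    · subst h; simp [hL]
    · simp [hL, Fin.succ_ne_zero]
  have hfact : (Matrix.of (Fin.cons (Fin.cons a w)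
        (fun i => Fin.cons (w i) (fun j => if i = j then lam i else 0))
        : Fin (m+1) → Fin (m+1) → ℝ)) = Lᵀ * D * L := by
    ext i j
    have hmul : (Lᵀ * D * L) i j = ∑ k, L k i * (Fin.cons S lam : Fin (m+1) → ℝ) k * L k j := by
      simp [Matrix.mul_apply, hD, Matrix.diagonal, Finset.sum_comm]
    rw [hmul]
    refine Fin.cases ?_ (fun i' => ?_) i <;> refine Fin.cases ?_ (fun j' => ?_) j
    · -- (0,0)
      rw [Fin.sum_univ_succ]
      simp only [hL, Matrix.of_apply, Fin.cons_zero, Fin.cons_succ, if_pos rfl, hS, if_true]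
      rw [Finset.sum_congr rfl fun k _ =>
        show w k / lam k * lam k * (w k / lam k) = w k ^ 2 / lam k from by
          rw [div_mul_cancel₀ _ (hlam k)]; ring]
      ring
    · -- (0, succ j')
      rw [Fin.sum_univ_succ]
      simp [hL, Ne.symm (Fin.succ_ne_zero j'), Fin.succ_ne_zero, Fin.succ_inj]
      rw [div_mul_cancel₀ _ (hlam j')]
    · -- (succ i', 0)
      rw [Fin.sum_univ_succ]
      simp [hL, Ne.symm (Fin.succ_ne_zero i'), Fin.succ_ne_zero, Fin.succ_inj]
      rw [mul_comm, div_mul_cancel₀ _ (hlam i')]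
    · -- (succ i', succ j')
      rw [Fin.sum_univ_succ]
      simp [hL, Ne.symm (Fin.succ_ne_zero j'), Ne.symm (Fin.succ_ne_zero i'), Fin.succ_ne_zero, Fin.succ_inj]
      rcases eq_or_ne i' j' with h | h; · simp [h]
      simp [h, Ne.symm h]
  rw [hfact, Matrix.det_mul, Matrix.det_mul, hdetL, Matrix.det_transpose, hdetL,
    hD, Matrix.det_diagonal, Fin.prod_cons]
  ring

open scoped RealInnerProductSpace

theorem stmt2aux {V : Type*} [NormedAddCommGroup V] [InnerProductSpace ℝ V]
    [FiniteDimensional ℝ V] {m : ℕ}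
    (hdim : Module.finrank ℝ V = m + 1)
    (H : V →ₗ[ℝ] V →ₗ[ℝ] ℝ) (hH : ∀ x y, H x y = H y x)
    (v : V) (hv : v ≠ 0)
    (b : OrthonormalBasis (Fin (m + 1)) ℝ V)
    (c : OrthonormalBasis (Fin m) ℝ ((ℝ ∙ v)ᗮ : Submodule ℝ V))
    (lam : Fin m → ℝ) (hlam : ∀ i, lam i ≠ 0)
    (hdiag : ∀ i j, H (c i : V) (c j : V) = if i = j then lam i else 0) :
    Matrix.det (Matrix.of fun i j => H (b i) (b j)) =
      Matrix.det (Matrix.of fun i j => H (c i : V) (c j : V)) * ‖v‖⁻¹ ^ 2 *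
        H v (v - ∑ i, (H v (c i : V) / lam i) • (c i : V)) := by
  classical
  set r : ℝ := ‖v‖⁻¹ with hr
  have hvnorm : ‖v‖ ≠ 0 := norm_ne_zero_iff.mpr hv
  set u : V := r • v with hu
  -- the orthonormal family
  set f : Fin (m + 1) → V := Fin.cons u (fun i => (c i : V)) with hf
  have hinner_vc : ∀ i : Fin (m + 1 - 1), ⟪v, (c i : V)⟫ = 0 := fun i =>
    (Submodule.mem_orthogonal _ _).mp (c i).2 v (Submodule.mem_span_singleton_self v)
  have hon : Orthonormal ℝ f := by
    rw [orthonormal_iff_ite]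
    intro i j
    refine Fin.cases ?_ (fun i' => ?_) i <;> refine Fin.cases ?_ (fun j' => ?_) j
    · simp only [hf, hu, Fin.cons_zero, if_pos rfl, real_inner_smul_left,
        real_inner_smul_right, real_inner_self_eq_norm_sq, hr]
      simp [norm_smul, abs_of_nonneg (norm_nonneg v), inv_mul_cancel₀ hvnorm]
    · simp only [hf, hu, Fin.cons_zero, Fin.cons_succ, real_inner_smul_left, hinner_vc j',
        mul_zero, if_neg (Ne.symm (Fin.succ_ne_zero j'))]
    · simp only [hf, hu, Fin.cons_zero, Fin.cons_succ, real_inner_smul_right,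
        if_neg (Fin.succ_ne_zero i')]
      rw [real_inner_comm, hinner_vc i', mul_zero]
    · have := orthonormal_iff_ite.mp c.orthonormal i' j'
      rw [Submodule.coe_inner] at this
      simpa [hf, Fin.succ_inj] using this
  have hcard : Fintype.card (Fin (m + 1)) = Module.finrank ℝ V := by simp [hdim]
  have hspan : ⊤ ≤ Submodule.span ℝ (Set.range f) := by
    have hB := (basisOfOrthonormalOfCardEqFinrank hon hcard).span_eq
    rw [coe_basisOfOrthonormalOfCardEqFinrank] at hB
    exact hB.ge
  set e : OrthonormalBasis (Fin (m + 1)) ℝ V := OrthonormalBasis.mk hon hspan with he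
  have hecoe : ⇑e = f := OrthonormalBasis.coe_mk hon hspan
  -- change of basis
  have hMb : (Matrix.of fun i j => H (b i) (b j)) =
      LinearMap.toMatrix₂ b.toBasis b.toBasis H := by
    ext i j
    simp [LinearMap.toMatrix₂_apply]
  have hMe : (Matrix.of fun i j => H (e i) (e j)) =
      LinearMap.toMatrix₂ e.toBasis e.toBasis H := by
    ext i j
    simp [LinearMap.toMatrix₂_apply]
  have hdet1 : (b.toBasis.toMatrix ⇑e.toBasis).det = b.toBasis.det ⇑e := by
    rw [Module.Basis.det_apply, OrthonormalBasis.coe_toBasis]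
  have hP2 : (b.toBasis.toMatrix ⇑e.toBasis).det ^ 2 = 1 := by
    rw [hdet1]
    rcases b.det_to_matrix_orthonormalBasis_real e with h | h <;> rw [h] <;> norm_num
  have hchange : (Matrix.of fun i j => H (b i) (b j)).det =
      (Matrix.of fun i j => H (e i) (e j)).det := by
    rw [hMb, hMe, ← LinearMap.toMatrix₂_mul_basis_toMatrix b.toBasis b.toBasis e.toBasis e.toBasis,
      Matrix.det_mul, Matrix.det_mul, Matrix.det_transpose]
    rw [show (b.toBasis.toMatrix ⇑e.toBasis).det * (LinearMap.toMatrix₂ b.toBasis b.toBasis H).det *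
        (b.toBasis.toMatrix ⇑e.toBasis).det =
        (b.toBasis.toMatrix ⇑e.toBasis).det ^ 2 * (LinearMap.toMatrix₂ b.toBasis b.toBasis H).det
      from by ring, hP2, one_mul]
  -- the arrow matrix
  set a : ℝ := H u u with ha
  set w : Fin m → ℝ := fun i => H u (c i : V) with hw
  have hMe_arrow : (Matrix.of fun i j => H (e i) (e j)) =
      Matrix.of (Fin.cons (Fin.cons a w)
        (fun i => Fin.cons (w i) (fun j => if i = j then lam i else 0))
        : Fin (m+1) → Fin (m+1) → ℝ) := by
    ext i j
    refine Fin.cases ?_ (fun i' => ?_) i <;> refine Fin.cases ?_ (fun j' => ?_) j <;>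
      simp [hecoe, hf, ha, hw, hdiag, hH u]
  have hdet_c : (Matrix.of fun i j => H (c i : V) (c j : V)).det = ∏ i, lam i := by
    have : (Matrix.of fun i j => H (c i : V) (c j : V)) = Matrix.diagonal lam := by
      ext i j
      simp [hdiag, Matrix.diagonal]
    rw [this, Matrix.det_diagonal]
  rw [hchange, hMe_arrow, arrow_det a w lam hlam, hdet_c]
  -- final algebra
  have hwa : ∀ i, w i = r * H v (c i : V) := fun i => by
    simp [hw, hu, LinearMap.map_smul]
  have haa : a = r ^ 2 * H v v := by
    simp [ha, hu, LinearMap.map_smul]; ring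
  have hrhs : H v (v - ∑ i, (H v (c i : V) / lam i) • (c i : V)) =
      H v v - ∑ i, (H v (c i : V)) ^ 2 / lam i := by
    rw [map_sub, map_sum]
    congr 1
    refine Finset.sum_congr rfl fun i _ => ?_
    rw [LinearMap.map_smul]
    field_simp
    ring
  rw [hrhs, haa]
  have hsum : ∑ i, w i ^ 2 / lam i = r ^ 2 * ∑ i, (H v (c i : V)) ^ 2 / lam i := by
    rw [Finset.mul_sum]
    exact Finset.sum_congr rfl fun i _ => by rw [hwa]; ring
  rw [hsum]
  ring

/-- For a symmetric bilinear form `H` on an `n`-dimensional Euclidean space and a nonzero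
vector `v` such that `H` restricted to `v^⊥` is nondegenerate (here: diagonalized by an
orthonormal basis `c` of `v^⊥` with nonzero eigenvalues `lam`), one has
`det H = det (H|_{v^⊥}) · ‖v‖⁻² · H(v, v^H)`, where
`v^H = v − Σᵢ (H(v, cᵢ)/lamᵢ) • cᵢ` is the projection of `v` onto the `H`-orthogonal
complement of `v^⊥` parallel to `v^⊥`. Determinants are taken in orthonormal bases. -/
theorem stmt2 {V : Type*} [NormedAddCommGroup V] [InnerProductSpace ℝ V]
    [FiniteDimensional ℝ V] {n : ℕ} (hn : 0 < n)
    (hdim : Module.finrank ℝ V = n)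
    (H : V →ₗ[ℝ] V →ₗ[ℝ] ℝ) (hH : ∀ x y, H x y = H y x)
    (v : V) (hv : v ≠ 0)
    (b : OrthonormalBasis (Fin n) ℝ V)
    (c : OrthonormalBasis (Fin (n - 1)) ℝ ((ℝ ∙ v)ᗮ : Submodule ℝ V))
    (lam : Fin (n - 1) → ℝ) (hlam : ∀ i, lam i ≠ 0)
    (hdiag : ∀ i j, H (c i : V) (c j : V) = if i = j then lam i else 0) :
    Matrix.det (Matrix.of fun i j => H (b i) (b j)) =
      Matrix.det (Matrix.of fun i j => H (c i : V) (c j : V)) * ‖v‖⁻¹ ^ 2 *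
        H v (v - ∑ i, (H v (c i : V) / lam i) • (c i : V)) := by
  obtain ⟨m, rfl⟩ : ∃ m, n = m + 1 := ⟨n - 1, (Nat.succ_pred_eq_of_pos hn).symm⟩
  exact stmt2aux hdim H hH v hv b c lam hlam hdiag
end

section
/- Let (M, g) be a Riemannian manifold, f : M → ℝ a proper, bounded-below C¹ function with 0 a regular value, and suppose inf over a compact neighborhood K of Z_f of ‖grad f‖ is at least 2ε > 0 and inf of |f| outside K is at least 2ε. If h, k are C¹ functions with 0 a regular value, compact sublevel sets, and sup-C¹-distance to f less than ε, then the symmetric difference M⁰_h △ M⁰_k is contained in the tubular neighborhood of Z_h of radius (1/ε)·sup|h − k|; i.e., every point of M⁰_h △ M⁰_k is at Riemannian distance at most (1/ε)·sup|h−k| from Z_h. -/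
open Set
open scoped symmDiff
open Filter

section Aux

variable {E : Type*} [NormedAddCommGroup E] [InnerProductSpace ℝ E]

set_option linter.unusedSectionVars false

/-- Direct minimization version of Ekeland's principle (proper space). -/
lemma exists_min_aux [ProperSpace E] (φ : E → ℝ) (hφ : Continuous φ) (hφ0 : ∀ w, 0 ≤ φ w)
    (x : E) {c : ℝ} (hc : 0 < c) :
    ∃ z, φ z + c * dist x z ≤ φ x ∧ ∀ w, φ z ≤ φ w + c * dist z w := by
  set F : E → ℝ := fun w => φ w + c * dist x w with hF
  have hFc : Continuous F :=
    hφ.add (continuous_const.mul (Continuous.dist continuous_const continuous_id))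
  have hxB : x ∈ Metric.closedBall x (φ x / c) := by
    simp [Metric.mem_closedBall, div_nonneg (hφ0 x) hc.le]
  obtain ⟨z, hzB, hzmin⟩ := (isCompact_closedBall x (φ x / c)).exists_isMinOn ⟨x, hxB⟩
    hFc.continuousOn
  have hFx : F x = φ x := by simp [hF]
  have hglobal : ∀ w, F z ≤ F w := by
    intro w
    by_cases hw : w ∈ Metric.closedBall x (φ x / c)
    · exact hzmin hw
    · have hd : φ x / c < dist x w := by
        simpa [Metric.mem_closedBall, dist_comm] using hw
      have : φ x < c * dist x w := by
        rwa [div_lt_iff₀ hc, mul_comm] at hd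
      have : F x < F w := by
        rw [hFx]
        calc φ x < c * dist x w := this
        _ ≤ φ w + c * dist x w := le_add_of_nonneg_left (hφ0 w)
      exact le_of_lt (lt_of_le_of_lt (hzmin hxB) this)
  refine ⟨z, ?_, ?_⟩
  · simpa [hFx] using hglobal x
  · intro w
    have := hglobal w
    simp only [hF] at this
    have htri : dist x w ≤ dist x z + dist z w := dist_triangle x z w
    nlinarith [hc.le]

lemma grad_le_aux [CompleteSpace E] {h : E → ℝ} {z : E} {c : ℝ} (hc : 0 ≤ c)
    (hd : DifferentiableAt ℝ h z)
    (hineq : ∀ᶠ w in nhds z, h z ≤ h w + c * dist z w) : ‖gradient h z‖ ≤ c := by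
  set v := gradient h z with hv
  rcases eq_or_ne v 0 with h0 | h0
  · simp [h0, hc]
  have hvpos : 0 < ‖v‖ := norm_pos_iff.mpr h0
  have hgrad : HasGradientAt h v z := hd.hasGradientAt
  have hf : HasFDerivAt h (InnerProductSpace.toDual ℝ E v) z := hgrad.hasFDerivAt
  have hcurve : HasDerivAt (fun s : ℝ => z - s • v) (-v) 0 := by
    simpa using ((hasDerivAt_id (0:ℝ)).smul_const v).const_sub z
  have hg : HasDerivAt (fun s : ℝ => h (z - s • v)) (-‖v‖ ^ 2) 0 := by
    have hf0 : HasFDerivAt h (InnerProductSpace.toDual ℝ E v) ((fun s : ℝ => z - s • v) 0) := by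
      simpa using hf
    have := hf0.comp_hasDerivAt 0 hcurve
    simpa [Function.comp_def, InnerProductSpace.toDual_apply_apply, real_inner_smul_right, real_inner_self_eq_norm_sq]
      using this
  set g : ℝ → ℝ := fun s => h (z - s • v) with hgdef
  have hslope : Tendsto (slope g 0) (nhdsWithin 0 (Ioi (0:ℝ))) (nhds (-‖v‖ ^ 2)) := by
    have := hasDerivAt_iff_tendsto_slope.mp hg
    exact this.mono_left (nhdsWithin_mono _ (fun s hs => ne_of_gt hs))
  have hccont : Continuous (fun s : ℝ => z - s • v) := by continuity
  have hev0 : ∀ᶠ s in nhds (0:ℝ), h z ≤ g s + c * dist z (z - s • v) := by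
    have ht : Tendsto (fun s : ℝ => z - s • v) (nhds 0) (nhds z) := by
      simpa using hccont.tendsto 0
    exact ht.eventually hineq
  have hev : ∀ᶠ s in nhdsWithin 0 (Ioi (0:ℝ)), -(c * ‖v‖) ≤ slope g 0 s := by
    filter_upwards [nhdsWithin_le_nhds hev0, self_mem_nhdsWithin] with s hs hspos
    have hdist : dist z (z - s • v) = s * ‖v‖ := by
      rw [dist_eq_norm]
      simp [norm_smul, abs_of_pos (Set.mem_Ioi.mp hspos)]
    rw [hdist] at hs
    have hg0 : g 0 = h z := by simp [hgdef]
    have hs' : (0:ℝ) < s := hspos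
    rw [slope_def_field, sub_zero, le_div_iff₀ hs']
    nlinarith [hs, hg0]
  have hfin : -(c * ‖v‖) ≤ -‖v‖ ^ 2 := ge_of_tendsto hslope hev
  have : ‖v‖ * ‖v‖ ≤ c * ‖v‖ := by nlinarith
  exact le_of_mul_le_mul_right (by linarith) hvpos

lemma ivt_aux {φ : E → ℝ} (hφ : Continuous φ) (x y : E) (hx : 0 ≤ φ x) (hy : φ y ≤ 0) :
    ∃ w, φ w = 0 ∧ dist x w ≤ dist x y := by
  set γ : ℝ → E := fun t => x + t • (y - x) with hγ
  have hγc : Continuous γ := by continuity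
  have h0 : γ 0 = x := by simp [hγ]
  have h1 : γ 1 = y := by simp [hγ]
  have := intermediate_value_Icc' (zero_le_one (α := ℝ)) (hφ.comp hγc).continuousOn
  have hmem : (0:ℝ) ∈ Icc ((φ ∘ γ) 1) ((φ ∘ γ) 0) := by
    simp [h0, h1, Function.comp, hx, hy]
  obtain ⟨t, ht, htval⟩ := this hmem
  refine ⟨γ t, htval, ?_⟩
  have : dist x (γ t) = |t| * ‖y - x‖ := by
    rw [dist_eq_norm, hγ]
    simp [norm_smul]
  rw [this, dist_eq_norm, norm_sub_rev]
  have h01 : |t| ≤ 1 := by rw [abs_of_nonneg ht.1]; exact ht.2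
  exact mul_le_of_le_one_left (norm_nonneg _) h01

lemma grad_neg_aux [CompleteSpace E] {h : E → ℝ} {z : E} (hd : DifferentiableAt ℝ h z) :
    gradient (fun w => -(h w)) z = - gradient h z := by
  have h1 : HasGradientAt h (gradient h z) z := hd.hasGradientAt
  have h2 : HasFDerivAt h (InnerProductSpace.toDual ℝ E (gradient h z)) z := h1.hasFDerivAt
  have h3 : HasFDerivAt (fun w => -(h w)) (-(InnerProductSpace.toDual ℝ E (gradient h z))) z :=
    h2.neg
  have h4 : (-(InnerProductSpace.toDual ℝ E (gradient h z)))
      = InnerProductSpace.toDual ℝ E (-(gradient h z)) := by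
    simp [map_neg]
  rw [h4] at h3
  exact h3.hasGradientAt.gradient.trans (LinearIsometryEquiv.symm_apply_apply _ _)

/-- The master lemma: double Ekeland-type minimization plus IVT. -/
lemma master_aux [ProperSpace E] [CompleteSpace E] (f h : E → ℝ)
    (hf : ContDiff ℝ 1 f) (hh : ContDiff ℝ 1 h)
    (ε δ : ℝ) (hε : 0 < ε) (hδ0 : 0 ≤ δ)
    (key : ∀ z, ‖gradient h z‖ ≤ ε → ε < |h z|)
    (keyf : ∀ z, ‖gradient f z‖ < 2*ε → 2*ε ≤ |f z|)
    (hhfv : ∀ z, |h z - f z| < ε)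
    (x : E) (hx0 : 0 ≤ h x) (hxδ : h x ≤ δ) (hfx : f x < ε) :
    ∃ z, h z = 0 ∧ dist x z ≤ δ / ε := by
  have hhc : Continuous h := hh.continuous
  have hfc : Continuous f := hf.continuous
  obtain ⟨z, hz1, hz2⟩ := exists_min_aux (fun w => max (h w) 0) (hhc.max continuous_const)
    (fun w => le_max_right _ _) x hε
  simp only [max_eq_left hx0] at hz1
  by_cases hz : h z ≤ 0
  · obtain ⟨w, hw0, hwd⟩ := ivt_aux hhc x z hx0 hz
    refine ⟨w, hw0, hwd.trans ?_⟩
    rw [le_div_iff₀ hε]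
    nlinarith [le_max_right (h z) (0:ℝ), hz1]
  · push_neg at hz
    have hev : ∀ᶠ w in nhds z, h z ≤ h w + ε * dist z w := by
      filter_upwards [(isOpen_lt continuous_const hhc).mem_nhds (show (0:ℝ) < h z from hz)]
        with w hw
      have := hz2 w
      rw [max_eq_left hz.le, max_eq_left (le_of_lt hw)] at this
      exact this
    have hgz := grad_le_aux hε.le (hh.differentiable one_ne_zero).differentiableAt hev
    have hεhz : ε < h z := by
      have := key z hgz
      rwa [abs_of_pos hz] at this
    have hzx : h z ≤ h x := by
      have h1 : h z ≤ max (h z) 0 := le_max_left _ _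
      nlinarith [dist_nonneg (x := x) (y := z), hz1]
    have hδε : ε < δ := lt_of_lt_of_le hεhz (hzx.trans hxδ)
    have hδpos : 0 < δ := lt_trans hε hδε
    -- Step B
    set t := min ε (δ - ε) / 2 with htdef
    have ht0 : 0 < t := by
      have : 0 < min ε (δ - ε) := lt_min hε (by linarith)
      positivity
    have htε : t < ε := by
      have : min ε (δ - ε) ≤ ε := min_le_left _ _
      rw [htdef]; linarith
    have ht2 : t ≤ (δ - ε)/2 := by
      have : min ε (δ - ε) ≤ δ - ε := min_le_right _ _
      rw [htdef]; linarith
    have hfxlb : -ε < f x := by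
      have := abs_lt.mp (hhfv x)
      linarith [this.1, this.2]
    set m := f x + ε + t with hm
    have hm0 : 0 < m := by rw [hm]; linarith
    have hmlt : m < 2*δ := by rw [hm]; linarith
    set c2 := m * ε / δ with hc2
    have hc2pos : 0 < c2 := div_pos (mul_pos hm0 hε) hδpos
    have hc2lt : c2 < 2*ε := by
      rw [hc2, div_lt_iff₀ hδpos]; nlinarith
    obtain ⟨y, hy1, hy2⟩ := exists_min_aux (fun w => max (f w + ε + t) 0)
      (((hfc.add continuous_const).add continuous_const).max continuous_const) (fun w => le_max_right _ _) x hc2pos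
    have hφ2x : max (f x + ε + t) 0 = m := max_eq_left hm0.le
    simp only [hφ2x] at hy1
    have hyzero : f y + ε + t ≤ 0 := by
      by_contra hpos
      push_neg at hpos
      have hev2 : ∀ᶠ w in nhds y, f y ≤ f w + c2 * dist y w := by
        filter_upwards [(isOpen_lt continuous_const ((hfc.add continuous_const).add continuous_const)).mem_nhds
          (show (0:ℝ) < f y + ε + t from hpos)] with w hw
        have := hy2 w
        rw [max_eq_left hpos.le, max_eq_left (le_of_lt (show (0:ℝ) < f w + ε + t from hw))] at this
        linarith
      have hgy := grad_le_aux hc2pos.le (hf.differentiable one_ne_zero).differentiableAt hev2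
      have hgylt : ‖gradient f y‖ < 2*ε := lt_of_le_of_lt hgy hc2lt
      have h2εfy := keyf y hgylt
      have hfyx : f y ≤ f x := by
        have h1 : f y + ε + t ≤ max (f y + ε + t) 0 := le_max_left _ _
        nlinarith [dist_nonneg (x := x) (y := y), hy1, mul_nonneg hc2pos.le
          (dist_nonneg (x := x) (y := y))]
      have hfyneg : f y ≤ -(2*ε) := by
        rcases le_abs.mp h2εfy with h' | h'
        · linarith
        · linarith
      linarith
    have hhy : h y < 0 := by
      have := abs_lt.mp (hhfv y)
      linarith [this.1, this.2]
    obtain ⟨w, hw0, hwd⟩ := ivt_aux hhc x y hx0 hhy.le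
    refine ⟨w, hw0, hwd.trans ?_⟩
    have hkey : c2 * (δ / ε) = m := by
      rw [hc2]; field_simp
    have hbound : c2 * dist x y ≤ m := by
      nlinarith [le_max_right (f y + ε + t) (0:ℝ), hy1]
    have := hbound.trans_eq hkey.symm
    exact le_of_mul_le_mul_left this hc2pos

end Aux


/-- (Formalized on the Riemannian manifold `ℝⁿ`.) Let `f` be a proper, bounded-below `C¹`
function with `0` a regular value; let `K` be a compact neighborhood of `Z_f = f⁻¹({0})`
with `‖grad f‖ ≥ 2ε` on `K` and `|f| ≥ 2ε` off `K`.  If `h, k` are `C¹` functions with `0` a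
regular value, compact sublevel sets, and sup-`C¹`-distance to `f` less than `ε`, and
`sup|h − k| ≤ δ`, then every point of `M⁰_h ∆ M⁰_k` is at distance at most `δ/ε` from
`Z_h`. -/
theorem stmt14 {n : ℕ} (f h k : EuclideanSpace ℝ (Fin n) → ℝ)
    (hf : ContDiff ℝ 1 f) (hh : ContDiff ℝ 1 h) (hk : ContDiff ℝ 1 k)
    (hfprop : ∀ K : Set ℝ, IsCompact K → IsCompact (f ⁻¹' K))
    (hfbdd : BddBelow (Set.range f))
    (hfreg : ∀ x, f x = 0 → gradient f x ≠ 0)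
    (hhreg : ∀ x, h x = 0 → gradient h x ≠ 0)
    (hkreg : ∀ x, k x = 0 → gradient k x ≠ 0)
    (hhsub : ∀ a : ℝ, IsCompact (h ⁻¹' Iic a))
    (hksub : ∀ a : ℝ, IsCompact (k ⁻¹' Iic a))
    (K : Set (EuclideanSpace ℝ (Fin n))) (hK : IsCompact K)
    (hKnb : K ∈ nhdsSet (f ⁻¹' {0}))
    (ε : ℝ) (hε : 0 < ε)
    (hKgrad : ∀ x ∈ K, 2 * ε ≤ ‖gradient f x‖)
    (hKout : ∀ x ∉ K, 2 * ε ≤ |f x|)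
    (hhf : ∀ x, |h x - f x| + ‖gradient h x - gradient f x‖ < ε)
    (hkf : ∀ x, |k x - f x| + ‖gradient k x - gradient f x‖ < ε)
    (δ : ℝ) (hδ : ∀ x, |h x - k x| ≤ δ) :
    ∀ x ∈ (h ⁻¹' Iic 0) ∆ (k ⁻¹' Iic 0), ∃ z, h z = 0 ∧ dist x z ≤ δ / ε := by
  have hhfv : ∀ z, |h z - f z| < ε := fun z => by
    linarith [hhf z, norm_nonneg (gradient h z - gradient f z)]
  have hhfg : ∀ z, ‖gradient h z - gradient f z‖ < ε := fun z => by
    linarith [hhf z, abs_nonneg (h z - f z)]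
  have hkfv : ∀ z, |k z - f z| < ε := fun z => by
    linarith [hkf z, norm_nonneg (gradient k z - gradient f z)]
  have key : ∀ z, ‖gradient h z‖ ≤ ε → ε < |h z| := by
    intro z hz
    by_cases hzK : z ∈ K
    · exfalso
      have h1 := hKgrad z hzK
      have h2 : ‖gradient f z‖ - ‖gradient h z‖ ≤ ‖gradient f z - gradient h z‖ :=
        norm_sub_norm_le _ _
      rw [norm_sub_rev] at h2
      linarith [hhfg z]
    · have h1 := hKout z hzK
      have h2 : |f z| - |h z| ≤ |f z - h z| := abs_sub_abs_le_abs_sub _ _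
      rw [abs_sub_comm] at h2
      linarith [hhfv z]
  have keyf : ∀ z, ‖gradient f z‖ < 2*ε → 2*ε ≤ |f z| := by
    intro z hz
    refine hKout z fun hzK => ?_
    exact absurd (hKgrad z hzK) (not_le.mpr hz)
  intro x hx
  have hδ0 : 0 ≤ δ := le_trans (abs_nonneg _) (hδ x)
  rw [Set.mem_symmDiff] at hx
  rcases hx with ⟨hx1, hx2⟩ | ⟨hx1, hx2⟩
  · -- h x ≤ 0 < k x : mirrored case
    simp only [mem_preimage, mem_Iic] at hx1 hx2
    push_neg at hx2
    have hkflt : |k x - f x| < ε := hkfv x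
    have hfxlb : -ε < f x := by
      have := abs_lt.mp hkflt
      linarith [this.2]
    have hd := (hh.differentiable one_ne_zero)
    have hdf := (hf.differentiable one_ne_zero)
    have key' : ∀ z, ‖gradient (fun w => -(h w)) z‖ ≤ ε → ε < |(fun w => -(h w)) z| := by
      intro z hz
      rw [grad_neg_aux (hd.differentiableAt), norm_neg] at hz
      simpa [abs_neg] using key z hz
    have keyf' : ∀ z, ‖gradient (fun w => -(f w)) z‖ < 2*ε → 2*ε ≤ |(fun w => -(f w)) z| := by
      intro z hz
      rw [grad_neg_aux (hdf.differentiableAt), norm_neg] at hz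
      simpa [abs_neg] using keyf z hz
    have hhfv' : ∀ z, |(fun w => -(h w)) z - (fun w => -(f w)) z| < ε := by
      intro z
      have heq : (fun w => -(h w)) z - (fun w => -(f w)) z = -(h z - f z) := by ring
      rw [heq, abs_neg]
      exact hhfv z
    obtain ⟨z, hz0, hzd⟩ := master_aux (fun w => -(f w)) (fun w => -(h w)) hf.neg hh.neg
      ε δ hε hδ0 key' keyf' hhfv' x (by simpa using hx1)
      (by simp only [neg_le]; linarith [neg_abs_le (h x - k x), hδ x])
      (by simp only [neg_lt]; linarith)
    exact ⟨z, neg_eq_zero.mp hz0, hzd⟩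
  · -- k x ≤ 0 < h x
    simp only [mem_preimage, mem_Iic] at hx1 hx2
    push_neg at hx2
    have hkflt : |k x - f x| < ε := hkfv x
    have hfx : f x < ε := by
      have := abs_lt.mp hkflt
      linarith [this.1]
    have hxδ : h x ≤ δ := by
      linarith [le_abs_self (h x - k x), hδ x]
    exact master_aux f h hf hh ε δ hε hδ0 key keyf hhfv x hx2.le hxδ hfx
end
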